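/- arXiv:1001.5073 — 2 statements merged into one kernel-verified Lean document; each statement's English description precedes it below -/
import Mathlib

section
/- Let A be a real n×m matrix with n < m satisfying the URP and having orthonormal rows (A Aᵀ = I_n), let 1 ≤ n0 ≤ n, let γ = γ_A(n0) (finite and positive), γ′ > γ, σ > 0, and x ∈ ℝⁿ. Set F = F_{γ′,σ}, λ′_max = 2/(1+γ), λ′_min = 2(γ′−γ)/((1+γ)(γ′+γ′²)), μ = 2/(λ′_min + λ′_max), and CR′ = (λ′_max − λ′_min)/(λ′_max + λ′_min). Let P denote the orthogonal projection onto the null space of A, and let s_opt ∈ S_x be a global maximizer of F over S_x. If s_i ∈ S_x satisfies F(s_i) ≥ m − n0/(2+2γ′), and s_{i+1} = s_i + μσ²·P∇F(s_i), then ‖s_{i+1} − s_opt‖ ≤ CR′·‖s_i − s_opt‖ and F(s_{i+1}) ≥ F(s_i). -/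
open Finset
open scoped BigOperators

noncomputable section

/-- Squared Euclidean norm of a vector. -/
def nsq {ι : Type*} [Fintype ι] (s : ι → ℝ) : ℝ := ∑ i, (s i) ^ 2

/-- The Unique Representation Property: every `n × n` submatrix of `A` is invertible. -/
def URP {n m : ℕ} (A : Matrix (Fin n) (Fin m) ℝ) : Prop :=
  ∀ g : Fin n → Fin m, Function.Injective g → IsUnit (A.submatrix id g)

/-- Number of nonzero components (the ℓ⁰ "norm"). -/
def l0 {ι : Type*} [Fintype ι] (s : ι → ℝ) : ℕ :=
  (Finset.univ.filter fun i => s i ≠ 0).card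

/-- Number of components with absolute value greater than σ. -/
def l0s {ι : Type*} [Fintype ι] (s : ι → ℝ) (σ : ℝ) : ℕ :=
  (Finset.univ.filter fun i => σ < |s i|).card

/-- The set of ratios ‖π_I(s)‖²/‖π_{Iᶜ}(s)‖² over index sets `I` with `|I| ≤ n0`
and nonzero null-space vectors `s`. -/
def gammaSet {n m : ℕ} (A : Matrix (Fin n) (Fin m) ℝ) (n0 : ℕ) : Set ℝ :=
  {r | ∃ (I : Finset (Fin m)) (s : Fin m → ℝ), I.card ≤ n0 ∧ A.mulVec s = 0 ∧ s ≠ 0 ∧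
    r = (∑ i ∈ I, (s i) ^ 2) / (∑ i ∈ Iᶜ, (s i) ^ 2)}

/-- γ_A(n0), the supremum of the above set of ratios. -/
def gammaA {n m : ℕ} (A : Matrix (Fin n) (Fin m) ℝ) (n0 : ℕ) : ℝ :=
  sSup (gammaSet A n0)

/-- Square of the largest singular value of a matrix (Rayleigh quotient form). -/
def sMaxSq {p q : Type*} [Fintype p] [Fintype q] (B : Matrix p q ℝ) : ℝ :=
  sSup {r | ∃ v : q → ℝ, nsq v = 1 ∧ r = nsq (B.mulVec v)}

/-- Square of the smallest singular value of a matrix with at least as many rows as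
columns (Rayleigh quotient form). -/
def sMinSq {p q : Type*} [Fintype p] [Fintype q] (B : Matrix p q ℝ) : ℝ :=
  sInf {r | ∃ v : q → ℝ, nsq v = 1 ∧ r = nsq (B.mulVec v)}

/-- The quadratic spline f_γ. -/
def fsp (γ u : ℝ) : ℝ :=
  if |u| ≤ 1 then 1 - u ^ 2 / (1 + γ)
  else if |u| ≤ 1 + γ then (|u| - γ - 1) ^ 2 / (γ ^ 2 + γ)
  else 0

/-- F_{γ,σ}(s) = Σ_i f_γ(s_i/σ). -/
def Fsp {m : ℕ} (γ σ : ℝ) (s : Fin m → ℝ) : ℝ := ∑ i, fsp γ (s i / σ)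

/-- The piecewise second derivative g_γ of f_γ. -/
def gsp (γ u : ℝ) : ℝ :=
  if |u| ≤ 1 then -2 / (1 + γ)
  else if |u| ≤ 1 + γ then 2 / (γ ^ 2 + γ)
  else 0

/-- The derivative f_γ′. -/
def fspDeriv (γ u : ℝ) : ℝ :=
  if |u| ≤ 1 then -2 * u / (1 + γ)
  else if |u| ≤ 1 + γ then 2 * (|u| - γ - 1) / (γ ^ 2 + γ) * Real.sign u
  else 0

/-- The gradient of F_{γ,σ}: its i-th component is (1/σ)·f_γ′(s_i/σ). -/
def gradF {m : ℕ} (γ σ : ℝ) (s : Fin m → ℝ) : Fin m → ℝ :=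
  fun i => fspDeriv γ (s i / σ) / σ

/-- The lower asymmetric restricted isometry constant δ_k^{min} of `A`. -/
def aricMin {n m : ℕ} (A : Matrix (Fin n) (Fin m) ℝ) (k : ℕ) : ℝ :=
  sInf {δ : ℝ | 0 ≤ δ ∧ ∀ s : Fin m → ℝ, l0 s ≤ k → (1 - δ) * nsq s ≤ nsq (A.mulVec s)}

end


section SplineLemmas

lemma max_zero_eq (a : ℝ) : max a 0 = (a + |a|)/2 := by
  rcases abs_cases a with ⟨h1, h2⟩ | ⟨h1, h2⟩
  · rw [max_eq_left h2]; linarith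
  · rw [max_eq_right h2.le]; linarith

lemma max_mono' {x y : ℝ} (hxy : y ≤ x) : max y 0 ≤ max x 0 := max_le_max hxy le_rfl

lemma hasDerivAt_maxsq (t : ℝ) : HasDerivAt (fun t : ℝ => max t 0 ^ 2) (2 * max t 0) t := by
  rcases lt_trichotomy t 0 with h | h | h
  · have : HasDerivAt (fun _ : ℝ => (0:ℝ)) (2 * max t 0) t := by
      simpa [max_eq_right h.le] using (hasDerivAt_const t (0:ℝ))
    refine this.congr_of_eventuallyEq ?_
    filter_upwards [eventually_lt_nhds h] with y hy
    simp [max_eq_right hy.le]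
  · subst h
    rw [hasDerivAt_iff_isLittleO]
    simp only [max_self, max_eq_right le_rfl, mul_zero, sub_zero, smul_eq_mul, zero_add]
    rw [Asymptotics.isLittleO_iff]
    intro ε hε
    filter_upwards [Metric.ball_mem_nhds (0:ℝ) hε] with x hx
    simp only [Metric.mem_ball, Real.dist_eq, sub_zero] at hx
    have h1 : max x 0 ^ 2 ≤ x ^ 2 := by
      rcases le_total x 0 with h' | h'
      · simp [max_eq_right h']; positivity
      · simp [max_eq_left h']
    have h2 : (0:ℝ) ≤ max x 0 ^ 2 := by positivity
    have : ‖max x 0 ^ 2 - 0 ^ 2‖ ≤ x ^ 2 := by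
      simp only [ne_eq, OfNat.ofNat_ne_zero, not_false_eq_true, zero_pow, sub_zero,
        Real.norm_eq_abs, abs_of_nonneg h2]
      exact h1
    refine this.trans ?_
    rw [sq]
    calc x * x ≤ |x| * |x| := by nlinarith [abs_nonneg x, le_abs_self x, neg_abs_le x]
    _ ≤ ε * ‖x‖ := by rw [Real.norm_eq_abs]; exact mul_le_mul_of_nonneg_right hx.le (abs_nonneg x)
  · have : HasDerivAt (fun y : ℝ => y ^ 2) (2 * max t 0) t := by
      simpa [max_eq_left h.le] using (hasDerivAt_pow 2 t)
    refine this.congr_of_eventuallyEq ?_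
    filter_upwards [eventually_gt_nhds h] with y hy
    simp [max_eq_left hy.le]

lemma fsp_rep {c : ℝ} (hc : 0 < c) (u : ℝ) :
    fsp c u = 1 - u^2/(1+c) + (max (u-1) 0 ^2 + max (-1-u) 0 ^2)/c
      - (max (u-1-c) 0 ^2 + max (-1-c-u) 0 ^2)/(c^2+c) := by
  have h1 : (0:ℝ) < 1 + c := by linarith
  have h2 : (0:ℝ) < c^2 + c := by positivity
  unfold fsp
  rcases le_or_gt |u| 1 with h | h
  · rw [if_pos h]
    rw [abs_le] at h
    rw [max_eq_right (by linarith), max_eq_right (by linarith),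
      max_eq_right (by linarith), max_eq_right (by linarith)]
    ring
  · rw [if_neg (not_le.mpr h)]
    rcases le_or_gt |u| (1+c) with h' | h'
    · rw [if_pos h']
      rcases abs_cases u with ⟨he, hs⟩ | ⟨he, hs⟩ <;> rw [he] at h h' ⊢
      · rw [max_eq_left (by linarith), max_eq_right (by linarith),
          max_eq_right (by linarith), max_eq_right (by linarith)]
        field_simp
        ring
      · rw [max_eq_right (by linarith), max_eq_left (by linarith),
          max_eq_right (by linarith), max_eq_right (by linarith)]
        field_simp
        ring
    · rw [if_neg (not_le.mpr h')]
      rcases abs_cases u with ⟨he, hs⟩ | ⟨he, hs⟩ <;> rw [he] at h h'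
      · rw [max_eq_left (by linarith), max_eq_right (by linarith),
          max_eq_left (by linarith), max_eq_right (by linarith)]
        field_simp
        ring
      · rw [max_eq_right (by linarith), max_eq_left (by linarith),
          max_eq_right (by linarith), max_eq_left (by linarith)]
        field_simp
        ring

lemma fspDeriv_rep {c : ℝ} (hc : 0 < c) (u : ℝ) :
    fspDeriv c u = -2*u/(1+c) + (2*max (u-1) 0 - 2*max (-1-u) 0)/c
      - (2*max (u-1-c) 0 - 2*max (-1-c-u) 0)/(c^2+c) := by
  have h1 : (0:ℝ) < 1 + c := by linarith
  have h2 : (0:ℝ) < c^2 + c := by positivity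
  unfold fspDeriv
  rcases le_or_gt |u| 1 with h | h
  · rw [if_pos h]
    rw [abs_le] at h
    rw [max_eq_right (by linarith), max_eq_right (by linarith),
      max_eq_right (by linarith), max_eq_right (by linarith)]
    ring
  · rw [if_neg (not_le.mpr h)]
    rcases le_or_gt |u| (1+c) with h' | h'
    · rw [if_pos h']
      rcases abs_cases u with ⟨he, hs⟩ | ⟨he, hs⟩ <;> rw [he] at h h' ⊢
      · rw [Real.sign_of_pos (by linarith), max_eq_left (by linarith),
          max_eq_right (by linarith), max_eq_right (by linarith), max_eq_right (by linarith)]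
        field_simp
        ring
      · rw [Real.sign_of_neg (by linarith), max_eq_right (by linarith),
          max_eq_left (by linarith), max_eq_right (by linarith), max_eq_right (by linarith)]
        field_simp
        ring
    · rw [if_neg (not_le.mpr h')]
      rcases abs_cases u with ⟨he, hs⟩ | ⟨he, hs⟩ <;> rw [he] at h h'
      · rw [max_eq_left (by linarith), max_eq_right (by linarith),
          max_eq_left (by linarith), max_eq_right (by linarith)]
        field_simp
        ring
      · rw [max_eq_right (by linarith), max_eq_left (by linarith),
          max_eq_right (by linarith), max_eq_left (by linarith)]
        field_simp
        ring

lemma hasDerivAt_fsp {c : ℝ} (hc : 0 < c) (u : ℝ) :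
    HasDerivAt (fsp c) (fspDeriv c u) u := by
  have e1 : HasDerivAt (fun u : ℝ => max (u-1) 0 ^ 2) (2 * max (u-1) 0) u := by
    simpa [Function.comp_def] using (hasDerivAt_maxsq (u-1)).comp u ((hasDerivAt_id u).sub_const 1)
  have e2 : HasDerivAt (fun u : ℝ => max (-1-u) 0 ^ 2) (-(2 * max (-1-u) 0)) u := by
    have inner : HasDerivAt (fun u : ℝ => -1-u) (-1 : ℝ) u := by
      simpa using ((hasDerivAt_id u).const_sub (-1 : ℝ))
    simpa [mul_comm, Function.comp_def] using (hasDerivAt_maxsq (-1-u)).comp u inner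
  have e3 : HasDerivAt (fun u : ℝ => max (u-1-c) 0 ^ 2) (2 * max (u-1-c) 0) u := by
    simpa [Function.comp_def] using (hasDerivAt_maxsq (u-1-c)).comp u (((hasDerivAt_id u).sub_const 1).sub_const c)
  have e4 : HasDerivAt (fun u : ℝ => max (-1-c-u) 0 ^ 2) (-(2 * max (-1-c-u) 0)) u := by
    have inner : HasDerivAt (fun u : ℝ => -1-c-u) (-1 : ℝ) u := by
      simpa using ((hasDerivAt_id u).const_sub (-1-c))
    simpa [mul_comm, Function.comp_def] using (hasDerivAt_maxsq (-1-c-u)).comp u inner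
  have e0 : HasDerivAt (fun u : ℝ => 1 - u^2/(1+c)) (-2*u/(1+c)) u := by
    have := ((hasDerivAt_pow 2 u).div_const (1+c)).const_sub 1
    simpa [neg_div] using this.congr_deriv (by push_cast; ring)
  have total := (e0.add (((e1.add e2).div_const c))).sub ((e3.add e4).div_const (c^2+c))
  have heq : (fun u : ℝ => 1 - u^2/(1+c) + (max (u-1) 0 ^2 + max (-1-u) 0 ^2)/c
      - (max (u-1-c) 0 ^2 + max (-1-c-u) 0 ^2)/(c^2+c)) = fsp c := by
    funext v; rw [fsp_rep hc]
  rw [← heq]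
  refine total.congr_deriv ?_
  rw [fspDeriv_rep hc]
  ring

lemma psi_key {c : ℝ} (hc : 0 < c) {x y : ℝ} (hxy : y ≤ x) :
    max (x-c) 0 - max (y-c) 0 ≤ (1+c) * (max x 0 - max y 0) := by
  have base : max (x-c) 0 - max (y-c) 0 ≤ max x 0 - max y 0 := by
    rw [max_zero_eq, max_zero_eq, max_zero_eq, max_zero_eq]
    rcases abs_cases x with ⟨h1,h1'⟩|⟨h1,h1'⟩ <;> rcases abs_cases y with ⟨h2,h2'⟩|⟨h2,h2'⟩ <;>
      rcases abs_cases (x-c) with ⟨h3,h3'⟩|⟨h3,h3'⟩ <;>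
      rcases abs_cases (y-c) with ⟨h4,h4'⟩|⟨h4,h4'⟩ <;> linarith
  have extra : 0 ≤ c * (max x 0 - max y 0) :=
    mul_nonneg hc.le (sub_nonneg.2 (max_mono' hxy))
  nlinarith [extra, base]

lemma lip_key {x y : ℝ} (hxy : y ≤ x) :
    max (x-1) 0 - max (y-1) 0 + (max (-1-y) 0 - max (-1-x) 0) ≤ x - y := by
  rw [max_zero_eq, max_zero_eq, max_zero_eq, max_zero_eq]
  rcases abs_cases (x-1) with ⟨h1,h1'⟩|⟨h1,h1'⟩ <;> rcases abs_cases (y-1) with ⟨h2,h2'⟩|⟨h2,h2'⟩ <;>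
    rcases abs_cases (-1-x) with ⟨h3,h3'⟩|⟨h3,h3'⟩ <;>
    rcases abs_cases (-1-y) with ⟨h4,h4'⟩|⟨h4,h4'⟩ <;> linarith

lemma diff_eq {c : ℝ} (hc : 0 < c) (a b : ℝ) :
    fspDeriv c a - fspDeriv c b = -(2/(1+c))*(a-b)
      + (2/c)*((max (a-1) 0 - max (b-1) 0) + (max (-1-b) 0 - max (-1-a) 0))
      - (2/(c^2+c))*((max (a-1-c) 0 - max (b-1-c) 0) + (max (-1-c-b) 0 - max (-1-c-a) 0)) := by
  rw [fspDeriv_rep hc, fspDeriv_rep hc]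
  have h1 : (1:ℝ) + c ≠ 0 := by positivity
  have h2 : (c:ℝ)^2 + c ≠ 0 := by positivity
  field_simp
  ring

lemma sec_lower {c : ℝ} (hc : 0 < c) {a b : ℝ} (hba : b ≤ a) :
    -(2/(1+c))*(a-b) ≤ fspDeriv c a - fspDeriv c b := by
  rw [diff_eq hc]
  have k1 := psi_key hc (show b-1 ≤ a-1 by linarith)
  have k2 := psi_key hc (show -1-a ≤ -1-b by linarith)
  have e1 : max (-1-c-a) 0 = max (-1-a-c) 0 := by ring_nf
  have e2 : max (-1-c-b) 0 = max (-1-b-c) 0 := by ring_nf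
  rw [e1, e2]
  set p := (max (a-1) 0 - max (b-1) 0) + (max (-1-b) 0 - max (-1-a) 0) with hp
  set q := (max (a-1-c) 0 - max (b-1-c) 0) + (max (-1-b-c) 0 - max (-1-a-c) 0) with hq
  have hQP : q ≤ (1+c) * p := by rw [hp, hq]; linarith
  have hP0 : 0 ≤ p := by
    have := max_mono' (show b-1 ≤ a-1 by linarith)
    have := max_mono' (show -1-a ≤ -1-b by linarith)
    rw [hp]; linarith
  have key : (2/(c^2+c)) * q ≤ (2/c) * p := by
    have hpos : (0:ℝ) < 2/(c^2+c) := by positivity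
    calc (2/(c^2+c)) * q ≤ (2/(c^2+c)) * ((1+c)*p) := by
          exact mul_le_mul_of_nonneg_left hQP hpos.le
      _ = (2/c) * p := by field_simp; ring
  linarith

lemma sec_upper {c : ℝ} (hc : 0 < c) {a b : ℝ} (hba : b ≤ a) :
    fspDeriv c a - fspDeriv c b ≤ (2/(c^2+c))*(a-b) := by
  rw [diff_eq hc]
  have e1 : max (-1-c-a) 0 = max (-1-a-c) 0 := by ring_nf
  have e2 : max (-1-c-b) 0 = max (-1-b-c) 0 := by ring_nf
  rw [e1, e2]
  have hQ0 : 0 ≤ (max (a-1-c) 0 - max (b-1-c) 0) + (max (-1-b-c) 0 - max (-1-a-c) 0) := by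
    have := max_mono' (show b-1-c ≤ a-1-c by linarith)
    have := max_mono' (show -1-a-c ≤ -1-b-c by linarith)
    linarith
  have hPle : (max (a-1) 0 - max (b-1) 0) + (max (-1-b) 0 - max (-1-a) 0) ≤ a - b := lip_key hba
  have hQpos : (0:ℝ) < 2/(c^2+c) := by positivity
  have hcpos : (0:ℝ) < 2/c := by positivity
  have hid : (2:ℝ)/(1+c) + 2/(c^2+c) = 2/c := by
    have h1 : (1:ℝ) + c ≠ 0 := by positivity
    field_simp
    ring
  nlinarith [mul_le_mul_of_nonneg_left hPle hcpos.le,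
    mul_le_mul_of_nonneg_left hQ0 hQpos.le]

lemma sec_ratio_low {c : ℝ} (hc : 0 < c) {a b : ℝ} (hab : a ≠ b) :
    -(2/(1+c)) ≤ (fspDeriv c a - fspDeriv c b)/(a-b) := by
  rcases hab.lt_or_gt with h | h
  · have hs := sec_lower hc h.le
    rw [le_div_iff_of_neg (by linarith : a - b < 0)]
    nlinarith [hs]
  · have hs := sec_lower hc h.le
    rw [le_div_iff₀ (by linarith : (0:ℝ) < a - b)]
    nlinarith [hs]

lemma sec_ratio_high {c : ℝ} (hc : 0 < c) {a b : ℝ} (hab : a ≠ b) :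
    (fspDeriv c a - fspDeriv c b)/(a-b) ≤ 2/(c^2+c) := by
  rcases hab.lt_or_gt with h | h
  · have hs := sec_upper hc h.le
    rw [div_le_iff_of_neg (by linarith : a - b < 0)]
    nlinarith [hs]
  · have hs := sec_upper hc h.le
    rw [div_le_iff₀ (by linarith : (0:ℝ) < a - b)]
    nlinarith [hs]

lemma tangent_aux (f f' : ℝ → ℝ) (hd : ∀ x, HasDerivAt f (f' x) x)
    (hm : ∀ x y, x ≤ y → f' x ≤ f' y) (a b : ℝ) : f a + f' a * (b - a) ≤ f b := by
  rcases lt_trichotomy a b with h | h | h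
  · obtain ⟨ξ, hξ, heq⟩ := exists_hasDerivAt_eq_slope f f' h
      (fun x _ => (hd x).continuousAt.continuousWithinAt) (fun x _ => hd x)
    have h1 : f' a ≤ f' ξ := hm a ξ hξ.1.le
    have h2 : f' a ≤ (f b - f a)/(b - a) := h1.trans heq.le
    rw [le_div_iff₀ (by linarith)] at h2
    linarith
  · subst h; simp
  · obtain ⟨ξ, hξ, heq⟩ := exists_hasDerivAt_eq_slope f f' h
      (fun x _ => (hd x).continuousAt.continuousWithinAt) (fun x _ => hd x)
    have h1 : f' ξ ≤ f' a := hm ξ a hξ.2.le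
    have h2 : (f a - f b)/(a - b) ≤ f' a := heq.symm.le.trans h1
    rw [div_le_iff₀ (by linarith)] at h2
    linarith

lemma fsp_tangent {c : ℝ} (hc : 0 < c) (a b : ℝ) :
    fsp c a + fspDeriv c a * (b - a) - (b-a)^2/(1+c) ≤ fsp c b := by
  have h1c : (0:ℝ) < 1 + c := by linarith
  have hd : ∀ x : ℝ, HasDerivAt (fun u => fsp c u + u^2/(1+c))
      (fspDeriv c x + 2*x/(1+c)) x := by
    intro x
    have := (hasDerivAt_fsp hc x).add ((hasDerivAt_pow 2 x).div_const (1+c))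
    exact this.congr_deriv (by push_cast; ring)
  have hm : ∀ x y : ℝ, x ≤ y →
      fspDeriv c x + 2*x/(1+c) ≤ fspDeriv c y + 2*y/(1+c) := by
    intro x y hxy
    have := sec_lower hc hxy
    have he : -(2/(1+c))*(y-x) = 2*x/(1+c) - 2*y/(1+c) := by ring
    linarith
  have := tangent_aux _ _ hd hm a b
  have he : a^2/(1+c) + (2*a/(1+c))*(b-a) - b^2/(1+c) = -((b-a)^2/(1+c)) := by ring
  nlinarith [this]

lemma fspDeriv_small {c a : ℝ} (ha : |a| ≤ 1) : fspDeriv c a = -2 * a / (1 + c) := by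
  unfold fspDeriv; rw [if_pos ha]

lemma fsp_le_one {c : ℝ} (hc : 0 < c) (u : ℝ) : fsp c u ≤ 1 := by
  unfold fsp
  have h1c : (0:ℝ) < 1 + c := by linarith
  split_ifs with h h'
  · have : 0 ≤ u^2/(1+c) := by positivity
    linarith
  · have h2 : (0:ℝ) < c^2 + c := by positivity
    rw [div_le_one h2]
    nlinarith [abs_nonneg u]
  · norm_num

lemma fsp_big {c : ℝ} (hc : 0 < c) {u : ℝ} (h : 1 < |u|) : fsp c u ≤ 1 - 1/(1+c) := by
  unfold fsp
  have h1c : (0:ℝ) < 1 + c := by linarith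
  rw [if_neg (not_le.mpr h)]
  have hfrac : (1:ℝ)/(1+c) ≤ 1 := by rw [div_le_one h1c]; linarith
  split_ifs with h'
  · have h2 : (0:ℝ) < c^2 + c := by positivity
    have key : (|u| - c - 1)^2 ≤ c^2 := by nlinarith
    have h3 : (|u| - c - 1)^2 / (c^2+c) ≤ c^2/(c^2+c) := by gcongr
    have he : c^2/(c^2+c) = 1 - 1/(1+c) := by field_simp; ring
    linarith
  · linarith

lemma urp_pos {n m : ℕ} (hnm : n ≤ m) (A : Matrix (Fin n) (Fin m) ℝ) (hURP : URP A)
    {w : Fin m → ℝ} (hw : A.mulVec w = 0) (hw0 : w ≠ 0) {I : Finset (Fin m)}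
    (hI : I.card ≤ n) : 0 < ∑ i ∈ Iᶜ, w i ^ 2 := by
  rcases (Finset.sum_nonneg (fun i _ => sq_nonneg (w i))).lt_or_eq with h | h
  · exact h
  exfalso
  have hzero : ∀ i ∈ Iᶜ, w i = 0 := by
    intro i hi
    have := (Finset.sum_eq_zero_iff_of_nonneg (fun i _ => sq_nonneg (w i))).mp h.symm i hi
    exact pow_eq_zero_iff (by norm_num) |>.mp this
  obtain ⟨K, hIK, -, hKcard⟩ := Finset.exists_subsuperset_card_eq (Finset.subset_univ I)
    hI (by simpa using hnm)
  have e : Fin n ≃ ↥K := (finCongr hKcard.symm).trans K.equivFin.symm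
  set g : Fin n → Fin m := fun j => ((e j : Fin m)) with hg
  have hginj : Function.Injective g := fun a b hab => e.injective (Subtype.ext hab)
  have hU := hURP g hginj
  set v : Fin n → ℝ := fun j => w (g j) with hv
  have hwoffK : ∀ k, k ∉ K → w k = 0 := by
    intro k hk
    exact hzero k (Finset.mem_compl.mpr fun hkI => hk (hIK hkI))
  have hMv : (A.submatrix id g).mulVec v = 0 := by
    funext i
    simp only [Matrix.mulVec, Matrix.submatrix_apply, dotProduct, id_eq, Pi.zero_apply]
    have step1 : ∑ j : Fin n, A i (g j) * w (g j) = ∑ k : ↥K, A i k * w k :=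
      Fintype.sum_equiv e _ _ (fun j => rfl)
    have step2 : ∑ k : ↥K, A i (↑k) * w (↑k) = ∑ k ∈ K, A i k * w k :=
      Finset.sum_coe_sort K (fun k => A i k * w k)
    have step3 : ∑ k ∈ K, A i k * w k = ∑ k, A i k * w k := by
      apply Finset.sum_subset (Finset.subset_univ K)
      intro k _ hk
      rw [hwoffK k hk, mul_zero]
    have := congrFun hw i
    simp only [Matrix.mulVec, dotProduct, Pi.zero_apply] at this
    rw [hv]
    calc ∑ j : Fin n, A i (g j) * w (g j) = ∑ k, A i k * w k := by
          rw [step1, step2, step3]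
      _ = 0 := this
  have hvinj := Matrix.mulVec_injective_iff_isUnit.mpr hU
  have hv0 : v = 0 := by
    apply hvinj
    rw [hMv, Matrix.mulVec_zero]
  apply hw0
  funext k
  by_cases hk : k ∈ K
  · have hgk : g (e.symm ⟨k, hk⟩) = k := by simp [hg]
    calc w k = v (e.symm ⟨k, hk⟩) := by rw [hv]; simp [hgk]
      _ = 0 := by rw [hv0]; rfl
  · exact hwoffK k hk

lemma count_small {m : ℕ} {c σ : ℝ} (hc : 0 < c) (hσ : 0 < σ) (s : Fin m → ℝ) (n0 : ℕ)
    (hF : (m:ℝ) - n0/(2+2*c) ≤ Fsp c σ s) :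
    2 * (Finset.univ.filter fun i => σ < |s i|).card ≤ n0 := by
  have h1c : (0:ℝ) < 1 + c := by linarith
  set B := Finset.univ.filter fun i : Fin m => σ < |s i| with hB
  have hterm : ∀ i ∈ B, 1/(1+c) ≤ 1 - fsp c (s i / σ) := by
    intro i hi
    rw [hB, Finset.mem_filter] at hi
    have habs : 1 < |s i / σ| := by
      rw [abs_div, abs_of_pos hσ, lt_div_iff₀ hσ]
      linarith [hi.2]
    have := fsp_big hc habs
    linarith
  have hsum1 : (B.card : ℝ) * (1/(1+c)) ≤ ∑ i ∈ B, (1 - fsp c (s i / σ)) := by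
    calc (B.card : ℝ) * (1/(1+c)) = ∑ _i ∈ B, 1/(1+c) := by
          rw [Finset.sum_const, nsmul_eq_mul]
      _ ≤ _ := Finset.sum_le_sum hterm
  have hsum2 : ∑ i ∈ B, (1 - fsp c (s i / σ)) ≤ ∑ i, (1 - fsp c (s i / σ)) := by
    apply Finset.sum_le_sum_of_subset_of_nonneg (Finset.subset_univ B)
    intro i _ _
    linarith [fsp_le_one hc (s i / σ)]
  have hsum3 : ∑ i, (1 - fsp c (s i / σ)) = (m:ℝ) - Fsp c σ s := by
    rw [Finset.sum_sub_distrib, Finset.sum_const, Finset.card_univ]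
    simp [Fsp]
  have hkey : (B.card : ℝ) * (1/(1+c)) ≤ (n0:ℝ)/(2+2*c) := by
    rw [hsum3] at hsum2
    linarith
  have : (2 * B.card : ℝ) ≤ n0 := by
    have h2 : (n0:ℝ)/(2+2*c) = (n0:ℝ)/2 * (1/(1+c)) := by
      rw [div_mul_div_comm, mul_one]; congr 1; ring
    rw [h2] at hkey
    have hpos : (0:ℝ) < 1/(1+c) := by positivity
    have hle : (B.card:ℝ) ≤ (n0:ℝ)/2 := le_of_mul_le_mul_right hkey hpos
    push_cast
    linarith
  exact_mod_cast this

end SplineLemmas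

set_option maxHeartbeats 2000000 in
/-- one projected steepest-ascent step with step size
μ = 2/(λ′_min + λ′_max) contracts the distance to the maximizer s_opt of F = F_{γ′,σ}
by the factor CR′ = (λ′_max − λ′_min)/(λ′_max + λ′_min), and does not decrease F. -/
theorem stmt_18 {n m : ℕ} (hnm : n < m) (A : Matrix (Fin n) (Fin m) ℝ)
    (hURP : URP A) (horth : A * A.transpose = 1)
    (n0 : ℕ) (hn1 : 1 ≤ n0) (hn0 : n0 ≤ n)
    (γ : ℝ) (hγ : γ = gammaA A n0) (hγpos : 0 < γ) (hbdd : BddAbove (gammaSet A n0))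
    (γ' : ℝ) (hγ' : γ < γ') (σ : ℝ) (hσ : 0 < σ) (x : Fin n → ℝ)
    (lmax lmin μ CR : ℝ)
    (hlmax : lmax = 2 / (1 + γ))
    (hlmin : lmin = 2 * (γ' - γ) / ((1 + γ) * (γ' + γ' ^ 2)))
    (hμ : μ = 2 / (lmin + lmax))
    (hCR : CR = (lmax - lmin) / (lmax + lmin))
    (P : (Fin m → ℝ) →ₗ[ℝ] (Fin m → ℝ))
    (hP1 : ∀ v, A.mulVec (P v) = 0)
    (hP2 : ∀ v, A.mulVec v = 0 → P v = v)
    (hP3 : ∀ v w : Fin m → ℝ, ∑ i, P v i * w i = ∑ i, v i * P w i)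
    (sopt : Fin m → ℝ) (hsoptx : A.mulVec sopt = x)
    (hsopt : ∀ s : Fin m → ℝ, A.mulVec s = x → Fsp γ' σ s ≤ Fsp γ' σ sopt)
    (si : Fin m → ℝ) (hsix : A.mulVec si = x)
    (hFi : (m : ℝ) - n0 / (2 + 2 * γ') ≤ Fsp γ' σ si)
    (snext : Fin m → ℝ) (hsnext : snext = si + (μ * σ ^ 2) • P (gradF γ' σ si)) :
    Real.sqrt (nsq (snext - sopt)) ≤ CR * Real.sqrt (nsq (si - sopt)) ∧
      Fsp γ' σ si ≤ Fsp γ' σ snext := by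
  -- basic positivity facts
  have hγ'pos : 0 < γ' := hγpos.trans hγ'
  have h1γ : (0:ℝ) < 1 + γ := by linarith
  have h1c : (0:ℝ) < 1 + γ' := by linarith
  have hc2 : (0:ℝ) < γ'^2 + γ' := by positivity
  have hlmaxpos : 0 < lmax := by rw [hlmax]; positivity
  have hlminpos : 0 < lmin := by
    rw [hlmin]; exact div_pos (by linarith) (by positivity)
  have hlle : lmin ≤ lmax := by
    rw [hlmin, hlmax, div_le_div_iff₀ (by positivity) h1γ]
    nlinarith
  have hsumpos : 0 < lmin + lmax := by linarith
  have hμpos : 0 < μ := by rw [hμ]; positivity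
  have hCR0 : 0 ≤ CR := by
    rw [hCR]; exact div_nonneg (by linarith) (by linarith)
  have hCRlt1 : CR < 1 := by
    rw [hCR, div_lt_one (by linarith)]; linarith
  have hμmax : μ * lmax = 1 + CR := by
    rw [hμ, hCR]; field_simp; ring
  have hμmin : μ * lmin = 1 - CR := by
    rw [hμ, hCR]; field_simp; ring
  have hL1lmax : 2/(1+γ') ≤ lmax := by
    rw [hlmax]; gcongr <;> linarith
  have hμle : μ ≤ 1 + γ' := by
    have h1 : μ ≤ 2/lmax := by rw [hμ]; gcongr <;> linarith
    have h2 : 2/lmax = 1+γ := by rw [hlmax]; field_simp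
    linarith
  have hidkey : 2/(1+γ') - lmin = γ*(2/(γ'^2+γ') + lmin) := by
    rw [hlmin]; field_simp; ring
  -- stationarity of sopt
  have hstat : ∀ v : Fin m → ℝ, A.mulVec v = 0 → ∑ i, gradF γ' σ sopt i * v i = 0 := by
    intro v hv
    have hfeas : ∀ t : ℝ, A.mulVec (sopt + t • v) = x := by
      intro t
      rw [Matrix.mulVec_add, Matrix.mulVec_smul, hsoptx, hv, smul_zero, add_zero]
    set φ : ℝ → ℝ := fun t => ∑ i, fsp γ' ((sopt i + t * v i)/σ) with hφ
    have hφF : ∀ t, φ t = Fsp γ' σ (sopt + t • v) := by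
      intro t
      rw [hφ]
      simp only [Fsp, Pi.add_apply, Pi.smul_apply, smul_eq_mul]
    have hterm : ∀ i : Fin m, HasDerivAt (fun t : ℝ => fsp γ' ((sopt i + t * v i)/σ))
        (fspDeriv γ' (sopt i/σ) * (v i/σ)) 0 := by
      intro i
      have hinner : HasDerivAt (fun t : ℝ => (sopt i + t * v i)/σ) (v i/σ) 0 :=
        ((hasDerivAt_mul_const (v i)).const_add (sopt i)).div_const σ
      have houter := hasDerivAt_fsp hγ'pos ((sopt i + 0 * v i)/σ)
      have hcomp := houter.comp 0 hinner
      simpa [Function.comp_def] using hcomp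
    have hd : HasDerivAt φ (∑ i, fspDeriv γ' (sopt i/σ) * (v i/σ)) 0 :=
      HasDerivAt.fun_sum (fun i _ => hterm i)
    have hmax : IsLocalMax φ 0 := by
      apply Filter.Eventually.of_forall
      intro t
      have h0 : φ 0 = Fsp γ' σ sopt := by
        rw [hφF 0]
        congr 1
        funext i
        simp
      rw [hφF t, h0]
      exact hsopt _ (hfeas t)
    have hzero := hmax.hasDerivAt_eq_zero hd
    calc ∑ i, gradF γ' σ sopt i * v i
        = ∑ i, fspDeriv γ' (sopt i/σ) * (v i/σ) := by
          apply Finset.sum_congr rfl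
          intro i _
          simp only [gradF]
          ring
      _ = 0 := hzero
  have hPstat : P (gradF γ' σ sopt) = 0 := by
    have hu0 : A.mulVec (P (gradF γ' σ sopt)) = 0 := hP1 _
    have hPu : P (P (gradF γ' σ sopt)) = P (gradF γ' σ sopt) := hP2 _ hu0
    have h1 : ∑ i, P (gradF γ' σ sopt) i * P (gradF γ' σ sopt) i
        = ∑ i, gradF γ' σ sopt i * P (gradF γ' σ sopt) i := by
      rw [hP3 (gradF γ' σ sopt) (P (gradF γ' σ sopt)), hPu]
    rw [hstat _ hu0] at h1
    funext i
    have hnn : ∀ j ∈ Finset.univ, (0:ℝ) ≤ P (gradF γ' σ sopt) j * P (gradF γ' σ sopt) j :=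
      fun j _ => mul_self_nonneg _
    have := (Finset.sum_eq_zero_iff_of_nonneg hnn).mp h1 i (Finset.mem_univ i)
    exact mul_self_eq_zero.mp this
  -- part 2 : F increases
  have hpart2 : Fsp γ' σ si ≤ Fsp γ' σ snext := by
    set gi := gradF γ' σ si with hgi
    have hsnext' : ∀ i, snext i = si i + (μ * σ^2) * P gi i := by
      intro i
      rw [hsnext]
      simp [Pi.add_apply, Pi.smul_apply, smul_eq_mul]
    have hN : ∑ i, gi i * P gi i = ∑ i, P gi i * P gi i := by
      have h := hP3 gi (P gi)
      rw [hP2 _ (hP1 gi)] at h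
      exact h.symm
    have hN0 : (0:ℝ) ≤ ∑ i, P gi i * P gi i := Finset.sum_nonneg fun i _ => mul_self_nonneg _
    have key : ∀ i : Fin m, fsp γ' (si i/σ) + (μ*σ^2*(P gi i)) * gi i
        - (μ*σ*(P gi i))^2/(1+γ') ≤ fsp γ' (snext i/σ) := by
      intro i
      have ht := fsp_tangent hγ'pos (si i/σ) (snext i/σ)
      have hb : snext i/σ - si i/σ = μ*σ*(P gi i) := by
        rw [hsnext' i]
        field_simp
        ring
      rw [hb] at ht
      have hgd : fspDeriv γ' (si i/σ) = σ * gi i := by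
        rw [hgi]
        simp only [gradF]
        field_simp
      rw [hgd] at ht
      calc fsp γ' (si i/σ) + (μ*σ^2*(P gi i)) * gi i - (μ*σ*(P gi i))^2/(1+γ')
          = fsp γ' (si i/σ) + (σ * gi i) * (μ*σ*(P gi i)) - (μ*σ*(P gi i))^2/(1+γ') := by ring
        _ ≤ fsp γ' (snext i/σ) := ht
    have hsum := Finset.sum_le_sum (fun i (_ : i ∈ Finset.univ) => key i)
    have ea : ∑ i, ((μ*σ^2*(P gi i)) * gi i) = μ*σ^2*(∑ i, P gi i * P gi i) := by
      rw [← hN, Finset.mul_sum]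
      apply Finset.sum_congr rfl
      intro i _
      ring
    have eb : ∑ i, ((μ*σ*(P gi i))^2/(1+γ')) = μ^2*σ^2/(1+γ')*(∑ i, P gi i * P gi i) := by
      rw [Finset.mul_sum]
      apply Finset.sum_congr rfl
      intro i _
      field_simp
    have e1 : ∑ i, (fsp γ' (si i/σ) + (μ*σ^2*(P gi i)) * gi i - (μ*σ*(P gi i))^2/(1+γ'))
        = Fsp γ' σ si + μ*σ^2*(∑ i, P gi i * P gi i)
          - μ^2*σ^2/(1+γ')*(∑ i, P gi i * P gi i) := by
      rw [Finset.sum_sub_distrib, Finset.sum_add_distrib, ea, eb]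
      rfl
    rw [e1] at hsum
    have hfinal : μ^2*σ^2/(1+γ')*(∑ i, P gi i * P gi i)
        ≤ μ*σ^2*(∑ i, P gi i * P gi i) := by
      have hcoef : μ^2*σ^2/(1+γ') ≤ μ*σ^2 := by
        rw [div_le_iff₀ h1c]
        have hkey : 0 ≤ μ*σ^2*((1+γ') - μ) :=
          mul_nonneg (mul_nonneg hμpos.le (sq_nonneg σ)) (by linarith)
        nlinarith [hkey]
      exact mul_le_mul_of_nonneg_right hcoef hN0
    have hFs : Fsp γ' σ snext = ∑ i, fsp γ' (snext i/σ) := rfl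
    rw [hFs]
    linarith
  -- part 1 : contraction
  have hpart1 : Real.sqrt (nsq (snext - sopt)) ≤ CR * Real.sqrt (nsq (si - sopt)) := by
    by_cases hd0 : si = sopt
    · have hgeq : gradF γ' σ si = gradF γ' σ sopt := by rw [hd0]
      have hsnext0 : snext = sopt := by
        rw [hsnext, hgeq, hPstat, smul_zero, add_zero, hd0]
      rw [hsnext0]
      have hz : nsq (sopt - sopt : Fin m → ℝ) = 0 := by simp [nsq]
      rw [hz, Real.sqrt_zero]
      exact mul_nonneg hCR0 (Real.sqrt_nonneg _)
    -- bad set and counting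
    · set Bd := (Finset.univ.filter fun i => σ < |si i|) ∪
        (Finset.univ.filter fun i => σ < |sopt i|) with hBdDef
      have hcard1 := count_small hγ'pos hσ si n0 hFi
      have hFopt : (m:ℝ) - n0/(2+2*γ') ≤ Fsp γ' σ sopt := le_trans hFi (hsopt si hsix)
      have hcard2 := count_small hγ'pos hσ sopt n0 hFopt
      have hBdcard : Bd.card ≤ n0 := by
        have hle := Finset.card_union_le (Finset.univ.filter fun i => σ < |si i|)
          (Finset.univ.filter fun i => σ < |sopt i|)
        rw [hBdDef] at *
        omega
      have hsmallBd : ∀ i, i ∉ Bd → |si i| ≤ σ ∧ |sopt i| ≤ σ := by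
        intro i hi
        rw [hBdDef, Finset.mem_union, not_or] at hi
        simp only [Finset.mem_filter, Finset.mem_univ, true_and, not_lt] at hi
        exact hi
      -- gamma inequality
      have hgamma : ∀ w : Fin m → ℝ, A.mulVec w = 0 →
          ∑ i ∈ Bd, w i^2 ≤ γ * ∑ i ∈ Bdᶜ, w i^2 := by
        intro w hw
        by_cases hw0 : w = 0
        · subst hw0; simp
        · have hden : 0 < ∑ i ∈ Bdᶜ, w i ^2 :=
            urp_pos hnm.le A hURP hw hw0 (hBdcard.trans hn0)
          have hmem : (∑ i ∈ Bd, w i^2)/(∑ i ∈ Bdᶜ, w i^2) ∈ gammaSet A n0 :=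
            ⟨Bd, w, hBdcard, hw, hw0, rfl⟩
          have hr := le_csSup hbdd hmem
          have hrr : (∑ i ∈ Bd, w i^2)/(∑ i ∈ Bdᶜ, w i^2) ≤ γ := by
            rw [hγ]; exact hr
          calc ∑ i ∈ Bd, w i^2
              = (∑ i ∈ Bd, w i^2)/(∑ i ∈ Bdᶜ, w i^2) * (∑ i ∈ Bdᶜ, w i^2) :=
                (div_mul_cancel₀ _ hden.ne').symm
            _ ≤ γ * ∑ i ∈ Bdᶜ, w i^2 := mul_le_mul_of_nonneg_right hrr hden.le
      -- secant coefficients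
      set hh : Fin m → ℝ := fun i => if si i = sopt i then -(2/(1+γ'))
        else (fspDeriv γ' (si i/σ) - fspDeriv γ' (sopt i/σ))/(si i/σ - sopt i/σ) with hhDef
      have hne : ∀ i, si i ≠ sopt i → si i/σ - sopt i/σ ≠ 0 := by
        intro i he
        rw [div_sub_div_same]
        exact div_ne_zero (sub_ne_zero.mpr he) hσ.ne'
      have hsec : ∀ i, fspDeriv γ' (si i/σ) - fspDeriv γ' (sopt i/σ)
          = hh i * (si i/σ - sopt i/σ) := by
        intro i
        by_cases he : si i = sopt i
        · rw [hhDef]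
          simp only [if_pos he, he, sub_self, mul_zero]
        · rw [hhDef]
          simp only [if_neg he]
          rw [div_mul_cancel₀ _ (hne i he)]
      have hneq : ∀ i, si i ≠ sopt i → si i/σ ≠ sopt i/σ := by
        intro i he
        intro hcon
        exact (hne i he) (by rw [hcon]; ring)
      have hlowh : ∀ i, -(2/(1+γ')) ≤ hh i := by
        intro i
        by_cases he : si i = sopt i
        · rw [hhDef]; simp only [if_pos he]; exact le_rfl
        · rw [hhDef]; simp only [if_neg he]
          exact sec_ratio_low hγ'pos (hneq i he)
      have hhighh : ∀ i, hh i ≤ 2/(γ'^2+γ') := by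
        intro i
        by_cases he : si i = sopt i
        · rw [hhDef]; simp only [if_pos he]
          have hp1 : (0:ℝ) < 2/(1+γ') := by positivity
          have hp2 : (0:ℝ) < 2/(γ'^2+γ') := by positivity
          linarith
        · rw [hhDef]; simp only [if_neg he]
          exact sec_ratio_high hγ'pos (hneq i he)
      have hsm : ∀ i, i ∉ Bd → hh i = -(2/(1+γ')) := by
        intro i hi
        obtain ⟨h1, h2⟩ := hsmallBd i hi
        by_cases he : si i = sopt i
        · rw [hhDef]; simp only [if_pos he]
        · rw [hhDef]; simp only [if_neg he]
          have ha : |si i/σ| ≤ 1 := by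
            rw [abs_div, abs_of_pos hσ, div_le_one hσ]; exact h1
          have hb : |sopt i/σ| ≤ 1 := by
            rw [abs_div, abs_of_pos hσ, div_le_one hσ]; exact h2
          rw [fspDeriv_small ha, fspDeriv_small hb]
          rw [show -2*(si i/σ)/(1+γ') - -2*(sopt i/σ)/(1+γ')
            = -(2/(1+γ'))*(si i/σ - sopt i/σ) by ring]
          exact mul_div_cancel_right₀ _ (hne i he)
      -- quadratic form bound
      have hQbound : ∀ w : Fin m → ℝ, A.mulVec w = 0 →
          |∑ i, (1 + μ * hh i) * w i^2| ≤ CR * ∑ i, w i^2 := by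
        intro w hw
        have hS2γ := hgamma w hw
        have hS10 : (0:ℝ) ≤ ∑ i ∈ Bdᶜ, w i^2 := Finset.sum_nonneg fun i _ => sq_nonneg _
        have hS20 : (0:ℝ) ≤ ∑ i ∈ Bd, w i^2 := Finset.sum_nonneg fun i _ => sq_nonneg _
        have htot : ∑ i, w i^2 = ∑ i ∈ Bd, w i^2 + ∑ i ∈ Bdᶜ, w i^2 :=
          (Finset.sum_add_sum_compl Bd _).symm
        have hsplit : ∑ i, (1 + μ * hh i) * w i^2
            = ∑ i ∈ Bd, (1+μ*hh i)*w i^2 + ∑ i ∈ Bdᶜ, (1+μ*hh i)*w i^2 :=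
          (Finset.sum_add_sum_compl Bd _).symm
        have hcompl : ∑ i ∈ Bdᶜ, (1+μ*hh i)*w i^2
            = (1 - μ*(2/(1+γ')))*(∑ i ∈ Bdᶜ, w i^2) := by
          rw [Finset.mul_sum]
          apply Finset.sum_congr rfl
          intro i hi
          rw [hsm i (Finset.mem_compl.mp hi)]
          ring
        have hupBd : ∑ i ∈ Bd, (1+μ*hh i)*w i^2
            ≤ (1 + μ*(2/(γ'^2+γ')))*(∑ i ∈ Bd, w i^2) := by
          rw [Finset.mul_sum]
          apply Finset.sum_le_sum
          intro i _
          apply mul_le_mul_of_nonneg_right ?_ (sq_nonneg _)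
          have := hhighh i
          nlinarith [hμpos.le]
        have hlowBd : (1 - μ*(2/(1+γ')))*(∑ i ∈ Bd, w i^2)
            ≤ ∑ i ∈ Bd, (1+μ*hh i)*w i^2 := by
          rw [Finset.mul_sum]
          apply Finset.sum_le_sum
          intro i _
          apply mul_le_mul_of_nonneg_right ?_ (sq_nonneg _)
          have := hlowh i
          nlinarith [hμpos.le]
        have hCRlow : -CR ≤ 1 - μ*(2/(1+γ')) := by
          have h2 : μ*(2/(1+γ')) ≤ μ*lmax := mul_le_mul_of_nonneg_left hL1lmax hμpos.le
          linarith [hμmax]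
        have hpos2 : (0:ℝ) < 2/(γ'^2+γ') := by positivity
        have hexpand : (1 + μ*(2/(γ'^2+γ')))*(∑ i ∈ Bd, w i^2)
            + (1 - μ*(2/(1+γ')))*(∑ i ∈ Bdᶜ, w i^2)
            - CR*(∑ i ∈ Bd, w i^2 + ∑ i ∈ Bdᶜ, w i^2)
            = μ*(lmin + 2/(γ'^2+γ'))*((∑ i ∈ Bd, w i^2) - γ*(∑ i ∈ Bdᶜ, w i^2)) := by
          linear_combination (-((∑ i ∈ Bd, w i^2) + (∑ i ∈ Bdᶜ, w i^2)))*hμmin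
            - μ*(∑ i ∈ Bdᶜ, w i^2)*hidkey
        have hneg : μ*(lmin + 2/(γ'^2+γ'))*((∑ i ∈ Bd, w i^2) - γ*(∑ i ∈ Bdᶜ, w i^2)) ≤ 0 := by
          apply mul_nonpos_of_nonneg_of_nonpos
          · exact mul_nonneg hμpos.le (by linarith [hlminpos, hpos2])
          · linarith [hS2γ]
        have hup : ∑ i, (1+μ*hh i)*w i^2 ≤ CR * ∑ i, w i^2 := by
          rw [hsplit, htot]
          linarith [hupBd, hcompl, hexpand, hneg]
        have hlow : -(CR * ∑ i, w i^2) ≤ ∑ i, (1+μ*hh i)*w i^2 := by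
          rw [hsplit, htot]
          have e1 : -CR*(∑ i ∈ Bd, w i^2) ≤ (1 - μ*(2/(1+γ')))*(∑ i ∈ Bd, w i^2) :=
            mul_le_mul_of_nonneg_right hCRlow hS20
          have e2 : -CR*(∑ i ∈ Bdᶜ, w i^2) ≤ (1 - μ*(2/(1+γ')))*(∑ i ∈ Bdᶜ, w i^2) :=
            mul_le_mul_of_nonneg_right hCRlow hS10
          linarith [e1, e2, hlowBd, hcompl]
        exact abs_le.mpr ⟨by linarith [hlow], hup⟩
      -- symmetric bilinear bound by polarization
      have hBil : ∀ u v : Fin m → ℝ, A.mulVec u = 0 → A.mulVec v = 0 →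
          ∑ i, (1 + μ*hh i) * (u i * v i) ≤ CR/2 * (∑ i, u i^2 + ∑ i, v i^2) := by
        intro u v hu hv
        have huv1 : A.mulVec (u + v) = 0 := by rw [Matrix.mulVec_add, hu, hv, add_zero]
        have huv2 : A.mulVec (u - v) = 0 := by rw [Matrix.mulVec_sub, hu, hv, sub_zero]
        have hq1 := hQbound (u+v) huv1
        have hq2 := hQbound (u-v) huv2
        have he : ∑ i, (1+μ*hh i)*(u i * v i)
            = (∑ i, ((1+μ*hh i)*((u+v) i)^2) - ∑ i, ((1+μ*hh i)*((u-v) i)^2))/4 := by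
          rw [← Finset.sum_sub_distrib, Finset.sum_div]
          apply Finset.sum_congr rfl
          intro i _
          simp only [Pi.add_apply, Pi.sub_apply]
          ring
        have epar : ∑ i, ((u+v) i)^2 + ∑ i, ((u-v) i)^2
            = 2*(∑ i, u i^2) + 2*(∑ i, v i^2) := by
          rw [← Finset.sum_add_distrib, Finset.mul_sum, Finset.mul_sum,
            ← Finset.sum_add_distrib]
          apply Finset.sum_congr rfl
          intro i _
          simp only [Pi.add_apply, Pi.sub_apply]
          ring
        have b1 : ∑ i, (1+μ*hh i)*((u+v) i)^2 ≤ CR*(∑ i, ((u+v) i)^2) := (abs_le.mp hq1).2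
        have b2 : -(CR*(∑ i, ((u-v) i)^2)) ≤ ∑ i, (1+μ*hh i)*((u-v) i)^2 := (abs_le.mp hq2).1
        have e6 : CR*(∑ i, ((u+v) i)^2) + CR*(∑ i, ((u-v) i)^2)
            = CR*(2*(∑ i, u i^2) + 2*(∑ i, v i^2)) := by
          rw [← mul_add, epar]
        rw [he]
        linarith [b1, b2, e6]
      -- final assembly
      have hdnull : A.mulVec (si - sopt) = 0 := by
        rw [Matrix.mulVec_sub, hsix, hsoptx, sub_self]
      set y : Fin m → ℝ := snext - sopt with hyDef
      set z : Fin m → ℝ := fun i => (si i - sopt i) + μ * (hh i * (si i - sopt i)) with hzDef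
      have hgdiff : gradF γ' σ si
          = gradF γ' σ sopt + (1/σ^2) • (fun i => hh i * (si i - sopt i)) := by
        funext i
        simp only [Pi.add_apply, Pi.smul_apply, smul_eq_mul, gradF]
        have hsi := hsec i
        have hss : si i/σ - sopt i/σ = (si i - sopt i)/σ := by ring
        rw [hss] at hsi
        have hrw : fspDeriv γ' (si i/σ)
            = fspDeriv γ' (sopt i/σ) + hh i * ((si i - sopt i)/σ) := by linarith [hsi]
        rw [hrw]
        field_simp
      have hyz : y = P z := by
        rw [hyDef, hsnext, hgdiff, map_add, map_smul, hPstat, zero_add]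
        have hzz : z = (si - sopt) + μ • (fun i => hh i * (si i - sopt i)) := by
          funext i
          simp [hzDef, Pi.add_apply, Pi.smul_apply, Pi.sub_apply, smul_eq_mul]
        rw [hzz, map_add, map_smul, hP2 _ hdnull]
        have hsc : (μ*σ^2) • ((1/σ^2) • P (fun i => hh i * (si i - sopt i)))
            = μ • P (fun i => hh i * (si i - sopt i)) := by
          rw [smul_smul]
          congr 1
          field_simp
        rw [hsc]
        abel
      have hynull : A.mulVec y = 0 := by rw [hyz]; exact hP1 _
      have sA : ∑ i, y i ^2 = ∑ i, P z i * y i := by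
        rw [hyz]
        exact Finset.sum_congr rfl fun i _ => pow_two _
      have sB := hP3 z y
      rw [hP2 y hynull] at sB
      have sD : ∑ i, z i * y i = ∑ i, (1+μ*hh i)*((si i - sopt i) * y i) :=
        Finset.sum_congr rfl fun i _ => by
          show ((si i - sopt i) + μ*(hh i*(si i - sopt i))) * y i = _
          ring
      have hqe : ∑ i, y i ^2 = ∑ i, (1+μ*hh i)*((si i - sopt i) * y i) :=
        sA.trans (sB.trans sD)
      -- positivity of the distance
      have hSd : 0 < ∑ i, (si - sopt) i^2 := by
        obtain ⟨j, hj⟩ := Function.ne_iff.mp (sub_ne_zero.mpr hd0)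
        have hj' : (si - sopt) j ≠ 0 := by simpa using hj
        have hjp : 0 < ((si - sopt) j)^2 := by
          rcases (sq_nonneg ((si - sopt) j)).lt_or_eq with h | h
          · exact h
          · exact absurd (pow_eq_zero_iff two_ne_zero |>.mp h.symm) hj'
        have h2 := Finset.single_le_sum (f := fun i => ((si - sopt) i)^2)
          (fun i _ => sq_nonneg _) (Finset.mem_univ j)
        linarith
      by_cases hy0 : ∑ i, y i^2 = 0
      · have h1 : nsq y = 0 := hy0
        rw [h1, Real.sqrt_zero]
        exact mul_nonneg hCR0 (Real.sqrt_nonneg _)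
      · have hSy : 0 < ∑ i, y i^2 :=
          lt_of_le_of_ne (Finset.sum_nonneg fun i _ => sq_nonneg _) (Ne.symm hy0)
        set p := Real.sqrt (∑ i, (si - sopt) i^2) with hpDef
        set q := Real.sqrt (∑ i, y i^2) with hqDef
        have hp0 : 0 < p := Real.sqrt_pos.mpr hSd
        have hq0 : 0 < q := Real.sqrt_pos.mpr hSy
        have hp2 : p^2 = ∑ i, (si - sopt) i^2 := Real.sq_sqrt hSd.le
        have hq2 : q^2 = ∑ i, y i^2 := Real.sq_sqrt hSy.le
        have ht : A.mulVec ((q/p) • (si - sopt)) = 0 := by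
          rw [Matrix.mulVec_smul, hdnull, smul_zero]
        have hbil := hBil ((q/p) • (si - sopt)) y ht hynull
        have e3 : ∑ i, (1+μ*hh i)*(((q/p) • (si - sopt)) i * y i)
            = (q/p) * ∑ i, (1+μ*hh i)*((si i - sopt i) * y i) := by
          rw [Finset.mul_sum]
          apply Finset.sum_congr rfl
          intro i _
          simp only [Pi.smul_apply, Pi.sub_apply, smul_eq_mul]
          ring
        have e4 : ∑ i, (((q/p) • (si - sopt)) i)^2 = (q/p)^2 * (∑ i, (si - sopt) i^2) := by
          rw [Finset.mul_sum]
          apply Finset.sum_congr rfl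
          intro i _
          simp only [Pi.smul_apply, Pi.sub_apply, smul_eq_mul]
          ring
        rw [e3, e4, ← hqe] at hbil
        have e5 : (q/p)^2 * (∑ i, (si - sopt) i^2) = q^2 := by
          rw [← hp2, div_pow, div_mul_cancel₀ _ (pow_ne_zero 2 hp0.ne')]
        rw [e5, ← hq2] at hbil
        have hfrac : q/p ≤ CR := by
          have hq2pos : 0 < q^2 := by positivity
          apply le_of_mul_le_mul_right ?_ hq2pos
          linarith [hbil]
        have hgoal : q ≤ CR * p := by
          rw [div_le_iff₀ hp0] at hfrac
          linarith
        exact hgoal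
  exact ⟨hpart1, hpart2⟩
end

section
/- Let A be a real n×m matrix with n < m satisfying the URP and having orthonormal rows (A Aᵀ = I_n), let 1 ≤ n0 ≤ n, and let γ = γ_A(n0) (finite and positive). Let ε > 0, let s0 ∈ ℝ^m with k = ‖s0‖₀, let k′ be a real number with k < k′ < n0/(2+2γ), and let x ∈ ℝⁿ satisfy ‖A s0 − x‖ < ε. Set c = 2m/(2m + n0/(2+2γ) − k′), and suppose σ_J > 0 satisfies σ_J ≥ 2√m·‖A‖₂·ε/((1+γ)(k′−k)) > c·σ_J, where ‖A‖₂ is the spectral norm of A. If s_J ∈ S_x satisfies F_{γ,σ_J}(s_J) ≥ m − k′, then ‖s_J − s0‖ ≤ C·ε, where C = (4m/(c·(k′−k)·√(γ+1)) + 1)·‖A‖₂. -/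
open Finset
open scoped BigOperators

noncomputable section Aux

lemma nsq_nonneg {ι : Type*} [Fintype ι] (s : ι → ℝ) : 0 ≤ nsq s :=
  Finset.sum_nonneg fun _ _ => sq_nonneg _

lemma nsq_eq_dot {ι : Type*} [Fintype ι] (s : ι → ℝ) : nsq s = dotProduct s s := by
  simp [nsq, dotProduct, sq]

lemma sqrt_sum_sq_add_le {ι : Type*} (F : Finset ι) (a b : ι → ℝ) :
    Real.sqrt (∑ i ∈ F, (a i + b i) ^ 2) ≤
      Real.sqrt (∑ i ∈ F, a i ^ 2) + Real.sqrt (∑ i ∈ F, b i ^ 2) := by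
  have hA : (0:ℝ) ≤ ∑ i ∈ F, a i ^ 2 := Finset.sum_nonneg fun _ _ => sq_nonneg _
  have hB : (0:ℝ) ≤ ∑ i ∈ F, b i ^ 2 := Finset.sum_nonneg fun _ _ => sq_nonneg _
  have hcs : (∑ i ∈ F, a i * b i) ≤
      Real.sqrt (∑ i ∈ F, a i ^ 2) * Real.sqrt (∑ i ∈ F, b i ^ 2) := by
    calc (∑ i ∈ F, a i * b i) ≤ Real.sqrt ((∑ i ∈ F, a i * b i) ^ 2) := by
          rw [Real.sqrt_sq_eq_abs]; exact le_abs_self _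
      _ ≤ Real.sqrt ((∑ i ∈ F, a i ^ 2) * ∑ i ∈ F, b i ^ 2) :=
          Real.sqrt_le_sqrt (Finset.sum_mul_sq_le_sq_mul_sq F a b)
      _ = _ := Real.sqrt_mul hA _
  have hexp : (∑ i ∈ F, (a i + b i) ^ 2)
      = (∑ i ∈ F, a i ^ 2) + 2 * (∑ i ∈ F, a i * b i) + ∑ i ∈ F, b i ^ 2 := by
    rw [Finset.mul_sum, ← Finset.sum_add_distrib, ← Finset.sum_add_distrib]
    exact Finset.sum_congr rfl fun i _ => by ring
  have h2 : (∑ i ∈ F, (a i + b i) ^ 2)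
      ≤ (Real.sqrt (∑ i ∈ F, a i ^ 2) + Real.sqrt (∑ i ∈ F, b i ^ 2)) ^ 2 := by
    rw [hexp, add_sq, Real.sq_sqrt hA, Real.sq_sqrt hB]
    nlinarith [hcs]
  calc Real.sqrt (∑ i ∈ F, (a i + b i) ^ 2)
      ≤ Real.sqrt ((Real.sqrt (∑ i ∈ F, a i ^ 2) + Real.sqrt (∑ i ∈ F, b i ^ 2)) ^ 2) :=
        Real.sqrt_le_sqrt h2
    _ = _ := Real.sqrt_sq (by positivity)

variable {n m : ℕ} (A : Matrix (Fin n) (Fin m) ℝ)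

lemma nsq_vecMul_eq (horth : A * A.transpose = 1) (y : Fin n → ℝ) :
    nsq (Matrix.vecMul y A) = nsq y := by
  rw [nsq_eq_dot, nsq_eq_dot, ← Matrix.mulVec_transpose, Matrix.dotProduct_mulVec,
    Matrix.mulVec_transpose, Matrix.vecMul_vecMul, horth, Matrix.vecMul_one]

lemma dot_null_proj (v : Fin m → ℝ) (hv : A.mulVec v = 0) (w : Fin n → ℝ) :
    dotProduct v (A.transpose.mulVec w) = 0 := by
  rw [Matrix.dotProduct_mulVec, Matrix.vecMul_transpose, hv, zero_dotProduct]

lemma nsq_add' {ι : Type*} [Fintype ι] (a b : ι → ℝ) :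
    nsq (a + b) = nsq a + 2 * dotProduct a b + nsq b := by
  unfold nsq dotProduct
  rw [Finset.mul_sum, ← Finset.sum_add_distrib, ← Finset.sum_add_distrib]
  exact Finset.sum_congr rfl fun i _ => by simp only [Pi.add_apply]; ring

lemma null_eq_zero_of_small_support (hURP : URP A) (hnm : n ≤ m)
    (s : Fin m → ℝ) (hnull : A.mulVec s = 0) (I : Finset (Fin m)) (hcard : I.card ≤ n)
    (hsupp : ∀ i, i ∉ I → s i = 0) : s = 0 := by
  obtain ⟨J, hIJ, hJcard⟩ := Finset.exists_superset_card_eq hcard (by simpa using hnm)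
  let e := J.orderIsoOfFin hJcard
  set g : Fin n → Fin m := fun t => (e t : Fin m) with hg
  have hginj : Function.Injective g := fun a b h => e.injective (Subtype.ext h)
  have hunit := hURP g hginj
  have hdet : (A.submatrix id g).det ≠ 0 :=
    ((Matrix.isUnit_iff_isUnit_det _).mp hunit).ne_zero
  have hsJ : ∀ j : Fin m, j ∉ J → s j = 0 := fun j hj => hsupp j (fun h => hj (hIJ h))
  have hmv : (A.submatrix id g).mulVec (s ∘ g) = 0 := by
    funext i
    have h1 : (A.submatrix id g).mulVec (s ∘ g) i = ∑ t : Fin n, A i (g t) * s (g t) := by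
      simp [Matrix.mulVec, dotProduct, Matrix.submatrix]
    have h2 : ∑ t : Fin n, A i (g t) * s (g t) = ∑ x : {x // x ∈ J}, A i x * s x :=
      e.toEquiv.sum_comp (fun x : {x // x ∈ J} => A i x * s x)
    have h3 : ∑ x : {x // x ∈ J}, A i (x:Fin m) * s x = ∑ j ∈ J, A i j * s j :=
      Finset.sum_attach J (fun j => A i j * s j)
    have h4 : ∑ j ∈ J, A i j * s j = ∑ j, A i j * s j := by
      apply Finset.sum_subset (Finset.subset_univ J)
      intro j _ hj
      rw [hsJ j hj, mul_zero]
    have h5 : A.mulVec s i = ∑ j, A i j * s j := by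
      simp [Matrix.mulVec, dotProduct]
    rw [h1, h2, h3, h4, ← h5, hnull]
  have hsg : s ∘ g = 0 := Matrix.eq_zero_of_mulVec_eq_zero hdet hmv
  funext j
  by_cases hj : j ∈ J
  · have hgj : g (e.symm ⟨j, hj⟩) = j := by simp [hg]
    calc s j = (s ∘ g) (e.symm ⟨j, hj⟩) := by rw [Function.comp_apply, hgj]
      _ = 0 := by rw [hsg]; rfl
  · exact hsJ j hj

lemma proj_eq (d : Fin m → ℝ) (horth : A * A.transpose = 1) :
    A.mulVec (A.transpose.mulVec (A.mulVec d)) = A.mulVec d := by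
  rw [Matrix.mulVec_mulVec, horth, Matrix.one_mulVec]

lemma nsq_mulVec_le (horth : A * A.transpose = 1) (v : Fin m → ℝ) :
    nsq (A.mulVec v) ≤ nsq v := by
  set p := A.transpose.mulVec (A.mulVec v) with hp
  have hnull : A.mulVec (v - p) = 0 := by
    rw [Matrix.mulVec_sub, hp, proj_eq A v horth, sub_self]
  have hdot : dotProduct (v - p) p = 0 := dot_null_proj A (v - p) hnull _
  have hv : v = (v - p) + p := by ring
  have hnp : nsq p = nsq (A.mulVec v) := by
    rw [hp, Matrix.mulVec_transpose]; exact nsq_vecMul_eq A horth _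
  calc nsq (A.mulVec v) = nsq p := hnp.symm
    _ ≤ nsq (v - p) + 2 * dotProduct (v - p) p + nsq p := by
        have := nsq_nonneg (v - p); rw [hdot]; linarith
    _ = nsq ((v - p) + p) := (nsq_add' _ _).symm
    _ = nsq v := by rw [← hv]

lemma sMaxSq_eq_one (horth : A * A.transpose = 1) (hn : 0 < n) : sMaxSq A = 1 := by
  have i0 : Fin n := ⟨0, hn⟩
  set y : Fin n → ℝ := Pi.single i0 1 with hy
  have hny : nsq y = 1 := by
    simp [nsq, hy, Pi.single_apply]
  have hmem : (1:ℝ) ∈ {r | ∃ v : Fin m → ℝ, nsq v = 1 ∧ r = nsq (A.mulVec v)} := by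
    refine ⟨Matrix.vecMul y A, by rw [nsq_vecMul_eq A horth, hny], ?_⟩
    rw [← Matrix.mulVec_transpose, Matrix.mulVec_mulVec, horth, Matrix.one_mulVec, hny]
  apply le_antisymm
  · apply csSup_le ⟨1, hmem⟩
    rintro r ⟨v, hv, rfl⟩
    calc nsq (A.mulVec v) ≤ nsq v := nsq_mulVec_le A horth v
      _ = 1 := hv
  · apply le_csSup ⟨1, ?_⟩ hmem
    rintro r ⟨v, hv, rfl⟩
    calc nsq (A.mulVec v) ≤ nsq v := nsq_mulVec_le A horth v
      _ = 1 := hv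

lemma fsp_le_one_s19 {γ : ℝ} (hγ : 0 < γ) (u : ℝ) : fsp γ u ≤ 1 := by
  unfold fsp
  have h0 : (0:ℝ) ≤ |u| := abs_nonneg u
  split_ifs with h1 h2
  · have : 0 ≤ u ^ 2 / (1 + γ) := by positivity
    linarith
  · rw [div_le_one (by positivity)]
    push_neg at h1
    nlinarith
  · norm_num

lemma fsp_nonneg {γ : ℝ} (hγ : 0 < γ) (u : ℝ) : 0 ≤ fsp γ u := by
  unfold fsp
  split_ifs with h1 h2
  · have hu : u ^ 2 ≤ 1 := by
      have := abs_le.mp h1; nlinarith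
    have : u ^ 2 / (1 + γ) ≤ 1 := by
      rw [div_le_one (by linarith)]; linarith
    linarith
  · positivity
  · exact le_refl 0

lemma one_sub_fsp_eq {γ : ℝ} {u : ℝ} (h : |u| ≤ 1) :
    1 - fsp γ u = u ^ 2 / (1 + γ) := by
  unfold fsp; rw [if_pos h]; ring

lemma one_sub_fsp_ge {γ : ℝ} (hγ : 0 < γ) {u : ℝ} (h : 1 < |u|) :
    1 / (1 + γ) ≤ 1 - fsp γ u := by
  unfold fsp
  rw [if_neg (not_le.mpr h)]
  split_ifs with h2
  · have hle : (|u| - γ - 1) ^ 2 / (γ ^ 2 + γ) ≤ γ / (1 + γ) := by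
      rw [div_le_div_iff₀ (by positivity) (by linarith)]
      have key : 0 ≤ (|u| - 1) * (1 + 2*γ - |u|) :=
        mul_nonneg (by linarith) (by linarith)
      nlinarith [key]
    have heq : γ / (1 + γ) + 1 / (1 + γ) = 1 := by field_simp; ring
    linarith
  · rw [sub_zero, div_le_one (by linarith)]; linarith

end Aux

/-- noisy case: if ‖As0 − x‖ < ε, σ_J satisfies
σ_J ≥ 2√m‖A‖₂ε/((1+γ)(k′−k)) > cσ_J, and s_J ∈ S_x satisfies F_{γ,σ_J}(s_J) ≥ m − k′,
then ‖s_J − s0‖ ≤ Cε with C = (4m/(c(k′−k)√(γ+1)) + 1)‖A‖₂. -/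
theorem stmt_19 {n m : ℕ} (hnm : n < m) (A : Matrix (Fin n) (Fin m) ℝ)
    (hURP : URP A) (horth : A * A.transpose = 1)
    (n0 : ℕ) (hn1 : 1 ≤ n0) (hn0 : n0 ≤ n)
    (γ : ℝ) (hγ : γ = gammaA A n0) (hγpos : 0 < γ) (hbdd : BddAbove (gammaSet A n0))
    (ε : ℝ) (hε : 0 < ε)
    (s0 : Fin m → ℝ) (k : ℕ) (hk : k = l0 s0)
    (k' : ℝ) (hk'1 : (k : ℝ) < k') (hk'2 : k' < n0 / (2 + 2 * γ))
    (x : Fin n → ℝ) (hx : Real.sqrt (nsq (A.mulVec s0 - x)) < ε)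
    (c : ℝ) (hc : c = 2 * m / (2 * m + n0 / (2 + 2 * γ) - k'))
    (σJ : ℝ) (hσJpos : 0 < σJ)
    (hσJ1 : 2 * Real.sqrt m * Real.sqrt (sMaxSq A) * ε / ((1 + γ) * (k' - k)) ≤ σJ)
    (hσJ2 : c * σJ < 2 * Real.sqrt m * Real.sqrt (sMaxSq A) * ε / ((1 + γ) * (k' - k)))
    (sJ : Fin m → ℝ) (hsJx : A.mulVec sJ = x)
    (hFsJ : (m : ℝ) - k' ≤ Fsp γ σJ sJ) :
    Real.sqrt (nsq (sJ - s0)) ≤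
      (4 * m / (c * (k' - k) * Real.sqrt (γ + 1)) + 1) * Real.sqrt (sMaxSq A) * ε := by
  classical
  have hγ1 : (0:ℝ) < 1 + γ := by linarith
  have hnpos : 0 < n := lt_of_lt_of_le hn1 hn0
  have hm0 : (0:ℝ) < m := by exact_mod_cast lt_of_le_of_lt (Nat.zero_le n) hnm
  have hkR : (0:ℝ) ≤ k := Nat.cast_nonneg k
  have hK : (0:ℝ) < k' - k := by linarith
  have hk'pos : (0:ℝ) < k' := lt_of_le_of_lt hkR hk'1
  have hn0m : (n0:ℝ) ≤ m := by
    exact_mod_cast le_of_lt (lt_of_le_of_lt hn0 hnm)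
  have hk'n0 : k' * (2 + 2*γ) < n0 := (lt_div_iff₀ (by linarith)).mp hk'2
  have hk'm : k' * (2 * (1 + γ)) < m := by
    have e : k' * (2 * (1 + γ)) = k' * (2 + 2*γ) := by ring
    rw [e]; linarith
  -- c bounds
  have hD : (0:ℝ) < 2*m + n0/(2+2*γ) - k' := by
    have := hk'2; linarith
  have hcpos : 0 < c := by rw [hc]; exact div_pos (by linarith) hD
  have hc1 : c ≤ 1 := by
    rw [hc, div_le_one hD]
    have hnn : (0:ℝ) ≤ n0/(2+2*γ) := by positivity
    linarith
  -- spectral norm is one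
  have hA1 : Real.sqrt (sMaxSq A) = 1 := by
    rw [sMaxSq_eq_one A horth hnpos, Real.sqrt_one]
  rw [hA1] at hσJ2
  have hσbound : c * σJ * ((1 + γ) * (k' - k)) < 2 * Real.sqrt m * ε := by
    have := (lt_div_iff₀ (by positivity : (0:ℝ) < (1 + γ) * (k' - k))).mp hσJ2
    linarith [this]
  -- spline bookkeeping
  set f : Fin m → ℝ := fun i => fsp γ (sJ i / σJ) with hf
  have hsum1 : ∑ i, (1 - f i) ≤ k' := by
    have he : ∑ i : Fin m, (1 - f i) = (m:ℝ) - Fsp γ σJ sJ := by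
      rw [Finset.sum_sub_distrib]
      simp [Fsp, hf]
    rw [he]; linarith
  have hfle : ∀ i, f i ≤ 1 := fun i => fsp_le_one_s19 hγpos _
  set T : Finset (Fin m) := Finset.univ.filter (fun i => σJ < |sJ i|) with hT
  have hTcard : (T.card : ℝ) * (1/(1+γ)) ≤ k' := by
    calc (T.card:ℝ) * (1/(1+γ)) = ∑ _i ∈ T, 1/(1+γ) := by
          rw [Finset.sum_const, nsmul_eq_mul]
      _ ≤ ∑ i ∈ T, (1 - f i) := by
          apply Finset.sum_le_sum
          intro i hi
          have hi' : σJ < |sJ i| := (Finset.mem_filter.mp hi).2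
          have habs : 1 < |sJ i / σJ| := by
            rw [abs_div, abs_of_pos hσJpos]
            rw [one_lt_div hσJpos]; exact hi'
          exact one_sub_fsp_ge hγpos habs
      _ ≤ ∑ i, (1 - f i) := by
          apply Finset.sum_le_sum_of_subset_of_nonneg (Finset.subset_univ T)
          intro i _ _; linarith [hfle i]
      _ ≤ k' := hsum1
  have hTcard' : (T.card:ℝ) ≤ (1+γ)*k' := by
    have h := hTcard
    rw [mul_one_div, div_le_iff₀ hγ1] at h
    linarith
  set I : Finset (Fin m) := (Finset.univ.filter fun i => s0 i ≠ 0) ∪ T with hI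
  have hIcard : I.card ≤ n0 := by
    have h1 : ((Finset.univ.filter fun i => s0 i ≠ 0).card : ℝ) = k := by
      rw [hk, l0]
    have h2 : (I.card:ℝ) ≤ (k:ℝ) + (1+γ)*k' := by
      have := Finset.card_union_le (Finset.univ.filter fun i => s0 i ≠ 0) T
      have hcast : (I.card:ℝ) ≤ ((Finset.univ.filter fun i => s0 i ≠ 0).card : ℝ)
          + (T.card:ℝ) := by exact_mod_cast this
      rw [h1] at hcast; linarith
    have hγk' : 0 ≤ γ * k' := mul_nonneg hγpos.le hk'pos.le
    have e : k' * (2+2*γ) = 2*k' + 2*(γ*k') := by ring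
    have e2 : (1+γ)*k' = k' + γ*k' := by ring
    have hlt : (I.card:ℝ) < n0 := by linarith
    exact_mod_cast le_of_lt (by exact_mod_cast hlt : I.card < n0)
  have hIcompl : ∀ i ∈ Iᶜ, s0 i = 0 ∧ |sJ i| ≤ σJ := by
    intro i hi
    rw [Finset.mem_compl, hI, Finset.mem_union] at hi
    push_neg at hi
    obtain ⟨h1, h2⟩ := hi
    constructor
    · by_contra h; exact h1 (Finset.mem_filter.mpr ⟨Finset.mem_univ i, h⟩)
    · by_contra h; push_neg at h
      exact h2 (Finset.mem_filter.mpr ⟨Finset.mem_univ i, h⟩)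
  have hsumIc : ∑ i ∈ Iᶜ, sJ i ^ 2 ≤ (1+γ) * σJ^2 * k' := by
    have heach : ∀ i ∈ Iᶜ, sJ i ^ 2 = (1+γ) * σJ^2 * (1 - f i) := by
      intro i hi
      have habs : |sJ i / σJ| ≤ 1 := by
        rw [abs_div, abs_of_pos hσJpos, div_le_one hσJpos]
        exact (hIcompl i hi).2
      rw [hf]
      rw [one_sub_fsp_eq habs]
      field_simp
    calc ∑ i ∈ Iᶜ, sJ i ^ 2 = (1+γ)*σJ^2 * ∑ i ∈ Iᶜ, (1 - f i) := by
          rw [Finset.mul_sum]; exact Finset.sum_congr rfl heach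
      _ ≤ (1+γ)*σJ^2 * k' := by
          apply mul_le_mul_of_nonneg_left _ (by positivity)
          calc ∑ i ∈ Iᶜ, (1 - f i) ≤ ∑ i, (1 - f i) := by
                apply Finset.sum_le_sum_of_subset_of_nonneg (Finset.subset_univ _)
                intro i _ _; linarith [hfle i]
            _ ≤ k' := hsum1
  -- decomposition
  set d : Fin m → ℝ := sJ - s0 with hd
  set p : Fin m → ℝ := A.transpose.mulVec (A.mulVec d) with hp
  set ν : Fin m → ℝ := d - p with hν
  have hAd : A.mulVec d = x - A.mulVec s0 := by
    rw [hd, Matrix.mulVec_sub, hsJx]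
  have hAdε : Real.sqrt (nsq (A.mulVec d)) < ε := by
    rw [hAd]
    have hsw : nsq (x - A.mulVec s0) = nsq (A.mulVec s0 - x) := by
      unfold nsq
      exact Finset.sum_congr rfl fun i _ => by
        simp only [Pi.sub_apply]; ring
    rw [hsw]; exact hx
  have hnp : nsq p = nsq (A.mulVec d) := by
    rw [hp, Matrix.mulVec_transpose]; exact nsq_vecMul_eq A horth _
  have hpε : Real.sqrt (nsq p) < ε := by rw [hnp]; exact hAdε
  have hνnull : A.mulVec ν = 0 := by
    rw [hν, Matrix.mulVec_sub, hp, proj_eq A d horth, sub_self]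
  -- constants
  set G := Real.sqrt (1+γ) with hGdef
  have hG2 : G^2 = 1+γ := Real.sq_sqrt hγ1.le
  have hGpos : 0 < G := Real.sqrt_pos.mpr hγ1
  set sm := Real.sqrt m with hsm
  have hsm2 : sm^2 = m := Real.sq_sqrt hm0.le
  have hsmpos : 0 < sm := Real.sqrt_pos.mpr hm0
  set sk := Real.sqrt k' with hsk
  have hsk2 : sk^2 = k' := Real.sq_sqrt hk'pos.le
  have hsknn : 0 ≤ sk := Real.sqrt_nonneg _
  set Cν := 4*(m:ℝ)*ε/(c*(k'-k)*G) with hCν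
  have hdenpos : 0 < c*(k'-k)*G := by positivity
  have hCνpos : 0 ≤ Cν := by positivity
  -- the key bound on the nullspace component
  have hνb : Real.sqrt (nsq ν) ≤ Cν := by
    by_cases hν0 : ν = 0
    · rw [hν0]
      have : nsq (0 : Fin m → ℝ) = 0 := by simp [nsq]
      rw [this, Real.sqrt_zero]; exact hCνpos
    · have hIcν : 0 < ∑ i ∈ Iᶜ, ν i ^ 2 := by
        rcases (Finset.sum_nonneg fun i (_ : i ∈ Iᶜ) => sq_nonneg (ν i)).lt_or_eq with h | h
        · exact h
        · exfalso
          apply hν0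
          apply null_eq_zero_of_small_support A hURP hnm.le ν hνnull I
            (le_trans hIcard hn0)
          intro i hiI
          have hi : i ∈ Iᶜ := Finset.mem_compl.mpr hiI
          have := (Finset.sum_eq_zero_iff_of_nonneg
            (fun j (_ : j ∈ Iᶜ) => sq_nonneg (ν j))).mp h.symm i hi
          exact pow_eq_zero_iff (by norm_num) |>.mp this
      have hratio : (∑ i ∈ I, ν i ^ 2)/(∑ i ∈ Iᶜ, ν i ^ 2) ≤ γ := by
        rw [hγ, gammaA]
        exact le_csSup hbdd ⟨I, ν, hIcard, hνnull, hν0, rfl⟩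
      have hIν : ∑ i ∈ I, ν i ^ 2 ≤ γ * ∑ i ∈ Iᶜ, ν i ^ 2 :=
        (div_le_iff₀ hIcν).mp hratio
      have hνsplit : nsq ν = ∑ i ∈ I, ν i ^ 2 + ∑ i ∈ Iᶜ, ν i ^ 2 :=
        (Finset.sum_add_sum_compl I _).symm
      have h1 : nsq ν ≤ (1+γ) * ∑ i ∈ Iᶜ, ν i ^ 2 := by rw [hνsplit]; linarith
      -- triangle inequality on Iᶜ
      have hνi : ∀ i ∈ Iᶜ, ν i = sJ i + (-p) i := by
        intro i hi
        have h0 := (hIcompl i hi).1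
        simp only [hν, hd, Pi.sub_apply, Pi.neg_apply]
        rw [h0]; ring
      have htri : Real.sqrt (∑ i ∈ Iᶜ, ν i ^ 2)
          ≤ Real.sqrt (∑ i ∈ Iᶜ, sJ i ^ 2) + Real.sqrt (∑ i ∈ Iᶜ, ((-p) i) ^ 2) := by
        rw [show ∑ i ∈ Iᶜ, ν i ^ 2 = ∑ i ∈ Iᶜ, (sJ i + (-p) i) ^ 2 from
          Finset.sum_congr rfl fun i hi => by rw [hνi i hi]]
        exact sqrt_sum_sq_add_le _ _ _
      have hps : Real.sqrt (∑ i ∈ Iᶜ, ((-p) i) ^ 2) ≤ Real.sqrt (nsq p) := by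
        apply Real.sqrt_le_sqrt
        calc ∑ i ∈ Iᶜ, ((-p) i) ^ 2 = ∑ i ∈ Iᶜ, p i ^ 2 := by
              exact Finset.sum_congr rfl fun i _ => by simp [Pi.neg_apply]
          _ ≤ nsq p := Finset.sum_le_sum_of_subset_of_nonneg (Finset.subset_univ _)
              (fun i _ _ => sq_nonneg _)
      have hsJbound : Real.sqrt (∑ i ∈ Iᶜ, sJ i ^ 2) ≤ G * σJ * sk := by
        calc Real.sqrt (∑ i ∈ Iᶜ, sJ i ^ 2) ≤ Real.sqrt ((1+γ) * σJ^2 * k') :=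
              Real.sqrt_le_sqrt hsumIc
          _ = G * σJ * sk := by
              rw [Real.sqrt_mul (by positivity), Real.sqrt_mul hγ1.le,
                Real.sqrt_sq hσJpos.le]
      have h2 : Real.sqrt (nsq ν) ≤ G * Real.sqrt (∑ i ∈ Iᶜ, ν i ^ 2) := by
        calc Real.sqrt (nsq ν) ≤ Real.sqrt ((1+γ) * ∑ i ∈ Iᶜ, ν i ^ 2) :=
              Real.sqrt_le_sqrt h1
          _ = G * Real.sqrt (∑ i ∈ Iᶜ, ν i ^ 2) := Real.sqrt_mul hγ1.le _
      have h3 : Real.sqrt (nsq ν) ≤ G * (G * σJ * sk + ε) := by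
        have := htri
        have hle : Real.sqrt (∑ i ∈ Iᶜ, ν i ^ 2) ≤ G * σJ * sk + ε := by
          have := le_trans hps hpε.le
          linarith [hsJbound]
        calc Real.sqrt (nsq ν) ≤ G * Real.sqrt (∑ i ∈ Iᶜ, ν i ^ 2) := h2
          _ ≤ G * (G * σJ * sk + ε) := mul_le_mul_of_nonneg_left hle hGpos.le
      -- arithmetic to conclude
      have f1 : c * (1+γ) * (k'-k) * σJ ≤ 2 * sm * ε := by
        calc c * (1+γ) * (k'-k) * σJ = c * σJ * ((1 + γ) * (k' - k)) := by ring
          _ ≤ 2 * sm * ε := hσbound.le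
      have f2 : G * sk ≤ sm := by
        have : G * sk = Real.sqrt ((1+γ) * k') := (Real.sqrt_mul hγ1.le k').symm
        rw [this, hsm]
        apply Real.sqrt_le_sqrt
        have e : k' * (2 * (1 + γ)) = 2*((1+γ)*k') := by ring
        have h0 : 0 ≤ (1+γ)*k' := mul_nonneg hγ1.le hk'pos.le
        linarith
      have f3 : c * (k'-k) * (1+γ) ≤ m := by
        have e0 : 0 ≤ (k'-k)*(1+γ) := mul_nonneg hK.le hγ1.le
        have e1 : (k'-k)*(1+γ) ≤ k'*(1+γ) :=
          mul_le_mul_of_nonneg_right (by linarith) hγ1.le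
        have e2 : c*((k'-k)*(1+γ)) ≤ (k'-k)*(1+γ) := mul_le_of_le_one_left e0 hc1
        have e3 : k' * (2 * (1 + γ)) = 2*(k'*(1+γ)) := by ring
        calc c * (k'-k) * (1+γ) = c*((k'-k)*(1+γ)) := by ring
          _ ≤ (k'-k)*(1+γ) := e2
          _ ≤ k'*(1+γ) := e1
          _ ≤ m := by linarith
      have hXC : G * (G * σJ * sk + ε) ≤ Cν := by
        rw [hCν, le_div_iff₀ hdenpos]
        have hexp : G * (G * σJ * sk + ε) * (c * (k'-k) * G)
            = (c * (1+γ) * (k'-k) * σJ) * (G * sk) + (c * (k'-k) * (1+γ)) * ε := by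
          rw [← hG2]; ring
        rw [hexp]
        have t1 : (c * (1+γ) * (k'-k) * σJ) * (G * sk) ≤ (2 * sm * ε) * sm := by
          apply mul_le_mul f1 f2 (by positivity) (by positivity)
        have t2 : (c * (k'-k) * (1+γ)) * ε ≤ m * ε :=
          mul_le_mul_of_nonneg_right f3 hε.le
        have t1' : (c * (1+γ) * (k'-k) * σJ) * (G * sk) ≤ 2*(m:ℝ)*ε := by
          calc (c * (1+γ) * (k'-k) * σJ) * (G * sk) ≤ (2 * sm * ε) * sm := t1
            _ = 2*(sm^2)*ε := by ring
            _ = 2*(m:ℝ)*ε := by rw [hsm2]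
        have hmε : 0 ≤ (m:ℝ)*ε := mul_nonneg hm0.le hε.le
        linarith [t1', t2]
      exact le_trans h3 hXC
  -- final combination
  have hdνp : Real.sqrt (nsq d) ≤ Real.sqrt (nsq ν) + Real.sqrt (nsq p) := by
    have hdsum : nsq d = ∑ i, (ν i + p i) ^ 2 := by
      unfold nsq
      exact Finset.sum_congr rfl fun i _ => by
        simp only [hν, Pi.sub_apply]; ring
    rw [hdsum]
    exact sqrt_sum_sq_add_le Finset.univ ν p
  have hfinal : Real.sqrt (nsq d) ≤ Cν + ε := by
    have := hpε
    linarith [hdνp, hνb]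
  rw [hA1, show γ + 1 = 1 + γ from add_comm γ 1, ← hGdef]
  calc Real.sqrt (nsq (sJ - s0)) = Real.sqrt (nsq d) := by rw [hd]
    _ ≤ Cν + ε := hfinal
    _ = (4 * m / (c * (k' - k) * G) + 1) * 1 * ε := by rw [hCν]; ring
end
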